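/- Let K be a perfect field, p an odd prime invertible in K, E an elliptic curve over K, and X a K-torsor under E[p]. With E[p] identified with Hom(E[p], μ_p) via the Weil pairing P ↦ e_p(P, −), there is a short exact sequence of G_K-modules 1 → μ_p → Aff(X, μ_p) → E[p] → 0, where μ_p sits inside Aff(X, μ_p) as the constant maps and the surjection sends an affine map to (the Weil-pairing dual of) its linear part. -/
import Mathlib


/-- A map `φ : X → μ` from a torsor `X` under `Ep` to a commutative group `μ` is affine if
it satisfies the (multiplicative) parallelogram condition. -/
def IsAffMul {Ep X μ : Type*} [AddGroup Ep] [AddTorsor Ep X] [CommGroup μ]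
    (φ : X → μ) : Prop :=
  ∀ (x : X) (P Q : Ep), φ ((P + Q) +ᵥ x) * φ x = φ (P +ᵥ x) * φ (Q +ᵥ x)

/-- Let `K` be a perfect field, `p` an odd prime invertible in `K`, `E`
an elliptic curve over `K` and `X` a `K`-torsor under `E[p]`.  Identifying `E[p]` with
`Hom(E[p], μ_p)` via the Weil pairing `P ↦ e_p(P,−)`, there is a short exact sequence of
`G_K`-modules `1 → μ_p → Aff(X, μ_p) → E[p] → 0`, where `μ_p` sits inside `Aff(X,μ_p)` as
the constant maps and the surjection sends an affine map to the Weil-pairing dual of its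
linear part; all maps are Galois equivariant.

Setup: `G = G_K`; `Ep = E[p]` and `μ = μ_p` are `G`-modules, `X` a torsor under `Ep` with
compatible `G`-action; `e` is the Weil pairing, assumed bilinear, Galois equivariant, and
a perfect duality (`hdual`). -/
theorem statement13 {G Ep X μ : Type*} [Group G]
    [AddCommGroup Ep] [DistribMulAction G Ep]
    [AddTorsor Ep X] [MulAction G X]
    [CommGroup μ] [MulDistribMulAction G μ]
    (p : ℕ) (hp : p.Prime) (hodd : Odd p)
    (htorEp : ∀ P : Ep, p • P = 0) (htorμ : ∀ c : μ, c ^ p = 1)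
    (hcompat : ∀ (σ : G) (P : Ep) (x : X), σ • (P +ᵥ x) = (σ • P) +ᵥ (σ • x))
    (e : Ep → Ep → μ)
    (hbil₁ : ∀ a b c : Ep, e (a + b) c = e a c * e b c)
    (hbil₂ : ∀ a b c : Ep, e a (b + c) = e a b * e a c)
    (hGal : ∀ (σ : G) (a b : Ep), σ • e a b = e (σ • a) (σ • b))
    (hdual : ∀ f : Ep → μ, (∀ a b : Ep, f (a + b) = f a * f b) →
      ∃! P : Ep, ∀ Q : Ep, f Q = e P Q) :
    -- the constant maps are affine and `μ_p ↪ Aff(X, μ_p)` is injective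
    ((∀ c : μ, IsAffMul (Function.const X c)) ∧
      Function.Injective fun c : μ => Function.const X c) ∧
    -- every affine map has a well-defined linear part, an element of `E[p]` via `e_p(P,−)`
    (∀ φ : X → μ, IsAffMul φ →
      ∃! P : Ep, ∀ (x : X) (Q : Ep), φ (Q +ᵥ x) = e P Q * φ x) ∧
    -- the projection to `E[p]` is surjective
    (∀ P : Ep, ∃ φ : X → μ, IsAffMul φ ∧ ∀ (x : X) (Q : Ep), φ (Q +ᵥ x) = e P Q * φ x) ∧
    -- exactness in the middle: the affine maps with trivial linear part are the constants
    (∀ φ : X → μ, IsAffMul φ →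
      ((∀ (x : X) (Q : Ep), φ (Q +ᵥ x) = φ x) ↔ ∃ c : μ, φ = Function.const X c)) ∧
    -- Galois equivariance of the projection
    (∀ (σ : G) (φ : X → μ) (P : Ep), IsAffMul φ →
      (∀ (x : X) (Q : Ep), φ (Q +ᵥ x) = e P Q * φ x) →
      IsAffMul (fun x : X => σ • φ (σ⁻¹ • x)) ∧
        ∀ (x : X) (Q : Ep),
          σ • φ (σ⁻¹ • (Q +ᵥ x)) = e (σ • P) Q * σ • φ (σ⁻¹ • x)) := by

  classical
  obtain ⟨x₀⟩ : Nonempty X := AddTorsor.nonempty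
  -- key independence lemma
  have key : ∀ φ : X → μ, IsAffMul φ → ∀ (x : X) (Q : Ep),
      φ (Q +ᵥ x) * φ x₀ = φ (Q +ᵥ x₀) * φ x := by
    intro φ hφ x Q
    have hx : (x -ᵥ x₀ : Ep) +ᵥ x₀ = x := vsub_vadd x x₀
    have h := hφ x₀ Q (x -ᵥ x₀)
    rw [add_vadd, hx] at h
    exact h
  -- the linear part
  have lin : ∀ φ : X → μ, IsAffMul φ →
      ∃! P : Ep, ∀ (x : X) (Q : Ep), φ (Q +ᵥ x) = e P Q * φ x := by
    intro φ hφ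
    set f : Ep → μ := fun Q => φ (Q +ᵥ x₀) * (φ x₀)⁻¹ with hf
    have hfhom : ∀ a b : Ep, f (a + b) = f a * f b := by
      intro a b
      have h := hφ x₀ a b
      simp only [hf]
      have h2 : φ ((a + b) +ᵥ x₀) = φ (a +ᵥ x₀) * φ (b +ᵥ x₀) * (φ x₀)⁻¹ := by
        rw [← h, mul_inv_cancel_right]
      rw [h2]
      simp [mul_assoc, mul_comm, mul_left_comm]
    obtain ⟨P, hP, hPu⟩ := hdual f hfhom
    refine ⟨P, ?_, ?_⟩
    · intro x Q
      have h := key φ hφ x Q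
      have h0 : φ (Q +ᵥ x₀) = e P Q * φ x₀ := by
        have h1 := hP Q
        simp only [hf] at h1
        rw [mul_inv_eq_iff_eq_mul] at h1
        exact h1
      apply mul_right_cancel (b := φ x₀)
      rw [h, h0]
      simp [mul_assoc, mul_comm, mul_left_comm]
    · intro P' hP'
      apply hPu
      intro Q
      simp [hf, hP' x₀ Q]
  refine ⟨⟨?_, ?_⟩, lin, ?_, ?_, ?_⟩
  · intro c x P Q
    simp [Function.const]
  · intro a b hab
    exact congrFun hab x₀
  · -- surjectivity
    intro P
    refine ⟨fun x => e P (x -ᵥ x₀), ?_, ?_⟩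
    · intro x A B
      simp only [vadd_vsub_assoc, hbil₂]
      simp [mul_assoc, mul_comm, mul_left_comm]
    · intro x Q
      simp only [vadd_vsub_assoc, hbil₂]
  · -- exactness in the middle
    intro φ hφ
    constructor
    · intro h
      refine ⟨φ x₀, funext fun x => ?_⟩
      have hx : (x -ᵥ x₀ : Ep) +ᵥ x₀ = x := vsub_vadd x x₀
      rw [Function.const, ← hx, h x₀ (x -ᵥ x₀)]
    · rintro ⟨c, rfl⟩ x Q
      rfl
  · -- Galois equivariance
    intro σ φ P hφ hP
    have hform : ∀ (x : X) (Q : Ep),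
        σ • φ (σ⁻¹ • (Q +ᵥ x)) = e (σ • P) Q * σ • φ (σ⁻¹ • x) := by
      intro x Q
      have hc : σ⁻¹ • (Q +ᵥ x) = (σ⁻¹ • Q) +ᵥ (σ⁻¹ • x) := hcompat σ⁻¹ Q x
      rw [hc, hP (σ⁻¹ • x) (σ⁻¹ • Q), smul_mul', hGal, smul_inv_smul]
    refine ⟨?_, hform⟩
    intro x A B
    simp only [hform, hbil₂]
    simp [mul_assoc, mul_comm, mul_left_comm]
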